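/- arXiv:1701.06070 — 2 statements merged into one kernel-verified Lean document; each statement's English description precedes it below -/
import Mathlib

section
/- Let Δ_k ⊂ U(p^k) act on C^{p^k} by the regular representation. If u ∈ U(p^k) satisfies u⁻¹Δ_k u ⊆ Σ_{p^k} (permutation matrices), then u⁻¹Δ_k u acts freely and transitively on the standard basis, and there exists σ ∈ Σ_{p^k} with σ⁻¹dσ = u⁻¹du for all d ∈ Δ_k; consequently u ∈ C_{U(p^k)}(Δ_k)·σ. -/
set_option linter.unusedSectionVars false

section Aux

variable {n : Type*} [Fintype n] [DecidableEq n]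

lemma permMatrix_apply (σ : Equiv.Perm n) (i j : n) :
    σ.permMatrix ℂ i j = if σ i = j then 1 else 0 := by
  simp [Equiv.Perm.permMatrix, PEquiv.toMatrix, Equiv.toPEquiv, Option.mem_def, eq_comm]

lemma permMatrix_injective : Function.Injective (fun σ : Equiv.Perm n => σ.permMatrix ℂ) := by
  intro σ ρ h
  ext x
  have h1 := congrFun (congrFun h x) (σ x)
  simp only [permMatrix_apply, if_pos rfl] at h1
  rcases eq_or_ne (ρ x) (σ x) with h2 | h2
  · exact h2.symm
  · rw [if_neg h2] at h1; exact absurd h1 one_ne_zero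

lemma permMatrix_mul (σ ρ : Equiv.Perm n) :
    (σ.permMatrix ℂ) * (ρ.permMatrix ℂ) = Equiv.Perm.permMatrix ℂ (σ.trans ρ) := by
  simp [Equiv.Perm.permMatrix, Equiv.toPEquiv_trans, PEquiv.toMatrix_trans]

lemma star_permMatrix (σ : Equiv.Perm n) :
    star (σ.permMatrix ℂ) = (σ⁻¹).permMatrix ℂ := by
  ext a b
  rw [Matrix.star_apply, permMatrix_apply, permMatrix_apply]
  rcases eq_or_ne (σ b) a with h | h
  · rw [if_pos h, if_pos (by simp [← h]), star_one]
  · rw [if_neg h, if_neg (fun hc => h (by rw [← hc]; exact σ.apply_symm_apply a)), star_zero]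

lemma trace_permMatrix' (σ : Equiv.Perm n) :
    Matrix.trace (σ.permMatrix ℂ) = ((Finset.univ.filter fun i => σ i = i).card : ℂ) := by
  simp only [Matrix.trace, Matrix.diag, permMatrix_apply, Finset.sum_boole]

end Aux

/-- The permutation matrix by which `d ∈ (ℤ/p)^k` acts in the regular representation of
`Δ_k = (ℤ/p)^k` on `ℂ^{p^k}` (basis indexed by the group itself). -/
def transMat {p k : ℕ} (d : Fin k → ZMod p) :
    Matrix (Fin k → ZMod p) (Fin k → ZMod p) ℂ :=
  Matrix.of fun i j => if i = d + j then 1 else 0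

lemma transMat_eq {p k : ℕ} [NeZero p] (d : Fin k → ZMod p) :
    transMat d = Equiv.Perm.permMatrix ℂ (Equiv.subRight d) := by
  ext i j
  rw [permMatrix_apply]
  simp only [transMat, Matrix.of_apply, Equiv.subRight_apply]
  congr 1
  simp [sub_eq_iff_eq_add', eq_iff_iff]

lemma transMat_mul {p k : ℕ} [NeZero p] (a b : Fin k → ZMod p) :
    transMat a * transMat b = transMat (a + b) := by
  rw [transMat_eq, transMat_eq, permMatrix_mul, transMat_eq]
  have h : (Equiv.subRight a).trans (Equiv.subRight b) = Equiv.subRight (a + b) := by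
    apply Equiv.ext; intro x; simp [sub_sub]
  rw [h]

/-- If `u ∈ U(p^k)` conjugates `Δ_k` (acting by the regular representation) into the group of
permutation matrices, then `u⁻¹ Δ_k u` acts freely and transitively on the standard basis,
and there is a permutation `τ` inducing the same conjugation on `Δ_k`, so that
`u ∈ C_{U(p^k)}(Δ_k) · τ`. -/
theorem conjugate_into_permutations {p k : ℕ} [Fact p.Prime] (hk : 1 ≤ k)
    (u : Matrix (Fin k → ZMod p) (Fin k → ZMod p) ℂ)
    (hu : u ∈ Matrix.unitaryGroup (Fin k → ZMod p) ℂ)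
    (hconj : ∀ d : Fin k → ZMod p, ∃ σ : Equiv.Perm (Fin k → ZMod p),
      star u * transMat d * u = σ.permMatrix ℂ) :
    -- the conjugated group acts freely on the standard basis
    (∀ d : Fin k → ZMod p, d ≠ 0 → ∀ σ : Equiv.Perm (Fin k → ZMod p),
      star u * transMat d * u = σ.permMatrix ℂ → ∀ i, σ i ≠ i) ∧
    -- and transitively
    (∀ i j : Fin k → ZMod p, ∃ (d : Fin k → ZMod p) (σ : Equiv.Perm (Fin k → ZMod p)),
      star u * transMat d * u = σ.permMatrix ℂ ∧ σ i = j) ∧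
    -- there is a permutation `τ` realizing the same conjugation, and `u = c · τ` with `c`
    -- centralizing `Δ_k`
    ∃ τ : Equiv.Perm (Fin k → ZMod p),
      (∀ d : Fin k → ZMod p,
        star (τ.permMatrix ℂ) * transMat d * τ.permMatrix ℂ = star u * transMat d * u) ∧
      ∃ c : Matrix (Fin k → ZMod p) (Fin k → ZMod p) ℂ,
        (∀ d : Fin k → ZMod p, c * transMat d = transMat d * c) ∧ u = c * τ.permMatrix ℂ := by
  classical
  have hu1 : star u * u = 1 := hu.1
  have hu2 : u * star u = 1 := hu.2
  -- freeness
  have free : ∀ d : Fin k → ZMod p, d ≠ 0 → ∀ σ : Equiv.Perm (Fin k → ZMod p),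
      star u * transMat d * u = σ.permMatrix ℂ → ∀ i, σ i ≠ i := by
    intro d hd σ heq i hfix
    have htr : Matrix.trace (σ.permMatrix ℂ) = Matrix.trace (transMat d) := by
      rw [← heq, Matrix.trace_mul_cycle, hu2, Matrix.one_mul]
    have h0 : Matrix.trace (transMat d) = 0 := by
      simp [Matrix.trace, Matrix.diag, transMat, right_eq_add, hd]
    rw [trace_permMatrix', h0] at htr
    have hc : (Finset.univ.filter fun j => σ j = j).card = 0 := by exact_mod_cast htr
    have hmem : i ∈ Finset.univ.filter fun j => σ j = j :=
      Finset.mem_filter.mpr ⟨Finset.mem_univ i, hfix⟩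
    rw [Finset.card_eq_zero.mp hc] at hmem
    simp at hmem
  choose σf hσ using hconj
  -- key multiplication identity
  have key : ∀ A B : Matrix (Fin k → ZMod p) (Fin k → ZMod p) ℂ,
      (star u * A * u) * (star u * B * u) = star u * (A * B) * u := by
    intro A B
    simp only [Matrix.mul_assoc]
    rw [← Matrix.mul_assoc u (star u), hu2, Matrix.one_mul]
  have hom : ∀ a b : Fin k → ZMod p, σf (a + b) = (σf a).trans (σf b) := by
    intro a b
    apply permMatrix_injective
    show Equiv.Perm.permMatrix ℂ (σf (a + b)) = Equiv.Perm.permMatrix ℂ ((σf a).trans (σf b))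
    rw [← hσ, ← permMatrix_mul, ← hσ, ← hσ, key, ← transMat_mul]
  have fixed_imp : ∀ (d : Fin k → ZMod p) i, σf d i = i → d = 0 := by
    intro d i h
    by_contra hd
    exact free d hd _ (hσ d) i h
  refine ⟨free, ?_, ?_⟩
  · -- transitivity
    intro i j
    have hinj : Function.Injective (fun d : Fin k → ZMod p => σf d i) := by
      intro a b hab
      have h1 : σf ((a - b) + b) i = σf b i := by rw [sub_add_cancel]; exact hab
      rw [hom, Equiv.trans_apply] at h1
      have h2 : σf (a - b) i = i := (σf b).injective h1
      exact sub_eq_zero.mp (fixed_imp _ _ h2)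
    obtain ⟨d, hd⟩ := (Finite.injective_iff_surjective.mp hinj) j
    exact ⟨d, σf d, hσ d, hd⟩
  · -- the permutation τ
    set t : (Fin k → ZMod p) → (Fin k → ZMod p) := fun y => σf (-y) 0 with ht
    have tinj : Function.Injective t := by
      intro y y' hyy
      have e1 : σf ((y' - y) + (-y')) 0 = σf (-y') 0 := by
        rw [show (y' - y) + (-y') = -y by abel]; exact hyy
      rw [hom, Equiv.trans_apply] at e1
      have h2 := (σf (-y')).injective e1
      exact (sub_eq_zero.mp (fixed_imp _ _ h2)).symm
    let τ : Equiv.Perm (Fin k → ZMod p) :=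
      Equiv.ofBijective t (Finite.injective_iff_bijective.mp tinj)
    have hτapp : ∀ y, τ y = σf (-y) 0 := fun y => rfl
    have hτrel : ∀ (d y : Fin k → ZMod p), σf d (τ y) = τ (y - d) := by
      intro d y
      rw [hτapp, hτapp]
      have h1 : σf ((-y) + d) 0 = σf d (σf (-y) 0) := by rw [hom, Equiv.trans_apply]
      rw [← h1, show -(y - d) = -y + d by abel]
    have hτmat : ∀ d : Fin k → ZMod p,
        star (τ.permMatrix ℂ) * transMat d * τ.permMatrix ℂ = star u * transMat d * u := by
      intro d
      rw [hσ d, star_permMatrix, transMat_eq, permMatrix_mul, permMatrix_mul]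
      have hequiv : ((τ⁻¹).trans (Equiv.subRight d)).trans τ = σf d := by
        apply Equiv.ext; intro x
        simp only [Equiv.trans_apply, Equiv.subRight_apply]
        have h1 := hτrel d (τ⁻¹ x)
        rw [show τ (τ⁻¹ x) = x from τ.apply_symm_apply x] at h1
        exact h1.symm
      rw [hequiv]
    have hPP : τ.permMatrix ℂ * star (τ.permMatrix ℂ) = 1 := by
      rw [star_permMatrix, permMatrix_mul]
      have : τ.trans τ⁻¹ = Equiv.refl (Fin k → ZMod p) := by apply Equiv.ext; intro x; simp
      rw [this, Equiv.Perm.permMatrix, Equiv.toPEquiv_refl, PEquiv.toMatrix_refl]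
    have hsPP : star (τ.permMatrix ℂ) * τ.permMatrix ℂ = 1 := by
      rw [star_permMatrix, permMatrix_mul]
      have : (τ⁻¹).trans τ = Equiv.refl (Fin k → ZMod p) := by apply Equiv.ext; intro x; simp
      rw [this, Equiv.Perm.permMatrix, Equiv.toPEquiv_refl, PEquiv.toMatrix_refl]
    refine ⟨τ, hτmat, u * star (τ.permMatrix ℂ), ?_, ?_⟩
    · intro d
      set P := τ.permMatrix ℂ
      have e := hτmat d
      have h1 : star P * transMat d = star u * (transMat d * (u * star P)) := by
        have h2 := congrArg (fun M => M * star P) e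
        simp only [Matrix.mul_assoc] at h2
        rw [hPP, Matrix.mul_one] at h2
        exact h2
      calc u * star P * transMat d = u * (star P * transMat d) := by rw [Matrix.mul_assoc]
        _ = u * (star u * (transMat d * (u * star P))) := by rw [h1]
        _ = (u * star u) * (transMat d * (u * star P)) := by rw [Matrix.mul_assoc]
        _ = transMat d * (u * star P) := by rw [hu2, Matrix.one_mul]
    · rw [Matrix.mul_assoc, hsPP, Matrix.mul_one]
end

section
/- Let G be a finite group acting irreducibly and unitarily on V, λ a G-invariant orthogonal decomposition on which G acts transitively with stabilizer I of each component normal in G (uniform isotropy). Then the components of λ, viewed as representations of I, are pairwise non-isomorphic irreducible I-representations. -/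
open scoped InnerProductSpace

/-- Let `G` be a finite group acting irreducibly and unitarily on `V`, and `D` a `G`-invariant
orthogonal decomposition on which `G` acts transitively with the stabilizer `I` of every
component normal in `G` (uniform isotropy).  Then the components of `D`, viewed as
representations of `I`, are pairwise non-isomorphic irreducible `I`-representations. -/
theorem components_irreducible_pairwise_nonisomorphic {G : Type*} [Group G] [Finite G]
    {V : Type*} [NormedAddCommGroup V] [InnerProductSpace ℂ V] [FiniteDimensional ℂ V]
    [Nontrivial V]
    (ρ : Representation ℂ G V)
    (hunitary : ∀ (g : G) (v w : V), ⟪ρ g v, ρ g w⟫_ℂ = ⟪v, w⟫_ℂ)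
    (hirr : ∀ U : Submodule ℂ V, (∀ g : G, U.map (ρ g) ≤ U) → U = ⊥ ∨ U = ⊤)
    (D : Set (Submodule ℂ V))
    (hnonzero : ∀ W ∈ D, W ≠ ⊥)
    (horth : ∀ W₁ ∈ D, ∀ W₂ ∈ D, W₁ ≠ W₂ → ∀ x ∈ W₁, ∀ y ∈ W₂, ⟪x, y⟫_ℂ = 0)
    (hsum : sSup D = ⊤)
    (hinv : ∀ (g : G), ∀ W ∈ D, W.map (ρ g) ∈ D)
    (htrans : ∀ W₁ ∈ D, ∀ W₂ ∈ D, ∃ g : G, W₁.map (ρ g) = W₂)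
    (I : Subgroup G) [I.Normal]
    (hI : ∀ W ∈ D, ∀ g : G, g ∈ I ↔ W.map (ρ g) = W) :
    -- each component is an irreducible `I`-representation
    (∀ W ∈ D, ∀ U : Submodule ℂ V, U ≤ W → (∀ g : I, U.map (ρ (g : G)) ≤ U) →
      U = ⊥ ∨ U = W) ∧
    -- distinct components are non-isomorphic as `I`-representations: there is no linear map
    -- that is `I`-equivariant on `W₁` and restricts to an injection of `W₁` onto `W₂`
    (∀ W₁ ∈ D, ∀ W₂ ∈ D, W₁ ≠ W₂ →
      ¬∃ φ : V →ₗ[ℂ] V,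
        (∀ g : I, ∀ x ∈ W₁, φ (ρ (g : G) x) = ρ (g : G) (φ x)) ∧
        W₁.map φ = W₂ ∧
        (∀ x ∈ W₁, φ x = 0 → x = 0)) := by
  classical
  -- generic facts
  have hmul : ∀ (a b : G) (x : V), ρ a (ρ b x) = ρ (a * b) x := by
    intro a b x; rw [map_mul]; rfl
  have hinvapply : ∀ (g : G) (x : V), ρ g⁻¹ (ρ g x) = x := by
    intro g x; rw [hmul, inv_mul_cancel, map_one]; rfl
  have hinvapply' : ∀ (g : G) (x : V), ρ g (ρ g⁻¹ x) = x := by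
    intro g x; rw [hmul, mul_inv_cancel, map_one]; rfl
  have hback : ∀ (g : G) (A : Submodule ℂ V) (x : V), x ∈ A.map (ρ g) → ρ g⁻¹ x ∈ A := by
    rintro g A x ⟨w, hw, rfl⟩
    rw [hinvapply]; exact hw
  constructor
  · -- Part 1: irreducibility of the components as `I`-representations
    intro W hW U hUW hUinv
    by_cases hU : U = ⊥
    · exact Or.inl hU
    right
    set T : Submodule ℂ V := ⨆ g : G, U.map (ρ g) with hT
    have hUT : U ≤ T := by
      have h1 := le_iSup (fun g => U.map (ρ g)) (1 : G)
      have h2 : U.map (ρ 1) = U := by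
        rw [map_one]; exact Submodule.map_id U
      rwa [h2] at h1
    have hTinv : ∀ g : G, T.map (ρ g) ≤ T := by
      intro h
      rw [hT, Submodule.map_iSup]
      apply iSup_le
      intro g
      have : (U.map (ρ g)).map (ρ h) = U.map (ρ (h * g)) := by
        rw [map_mul, ← Submodule.map_comp]; rfl
      rw [this]
      exact le_iSup (fun g => U.map (ρ g)) (h * g)
    have hTtop : T = ⊤ := by
      rcases hirr T hTinv with h | h
      · exact absurd (le_bot_iff.mp (h ▸ hUT)) hU
      · exact h
    have hle : T ≤ U ⊔ Wᗮ := by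
      apply iSup_le
      intro g
      by_cases hg : g ∈ I
      · exact le_sup_of_le_left (hUinv ⟨g, hg⟩)
      · apply le_sup_of_le_right
        have hWg : W.map (ρ g) ∈ D := hinv g W hW
        have hne : W.map (ρ g) ≠ W := fun h => hg ((hI W hW g).mpr h)
        refine (Submodule.map_mono hUW).trans ?_
        intro x hx
        rw [Submodule.mem_orthogonal]
        intro u hu
        exact horth W hW _ hWg (Ne.symm hne) u hu x hx
    refine le_antisymm hUW ?_
    intro x hx
    have hxT : x ∈ U ⊔ Wᗮ := hle (hTtop ▸ Submodule.mem_top)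
    obtain ⟨u, hu, y, hy, hxy⟩ := Submodule.mem_sup.mp hxT
    have hy0 : y = 0 := by
      rw [← inner_self_eq_zero (𝕜 := ℂ) (x := y)]
      have h1 : ⟪x, y⟫_ℂ = 0 := (Submodule.mem_orthogonal W y).mp hy x hx
      have h2 : ⟪u, y⟫_ℂ = 0 := (Submodule.mem_orthogonal W y).mp hy u (hUW hu)
      have hyx : y = x - u := by rw [← hxy]; abel
      rw [hyx] at h1 h2
      rw [hyx, inner_sub_left, h1, h2, sub_zero]
    rw [← hxy, hy0, add_zero]
    exact hu
  · -- Part 2: pairwise non-isomorphism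
    rintro W₁ hW₁ W₂ hW₂ hne ⟨φ, hequiv, hmap, hinj⟩
    have hW1W2 : W₁ ⊓ W₂ = ⊥ := by
      rw [eq_bot_iff]
      intro x hx
      have := horth W₁ hW₁ W₂ hW₂ hne x hx.1 x hx.2
      rw [inner_self_eq_zero (𝕜 := ℂ)] at this
      simp [this]
    -- choose, for each component, a group element carrying `W₁` to it
    have hchoice : ∀ W : Submodule ℂ V, ∃ g : G, W ∈ D → W₁.map (ρ g) = W := by
      intro W
      by_cases h : W ∈ D
      · obtain ⟨g, hg⟩ := htrans W₁ hW₁ W h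
        exact ⟨g, fun _ => hg⟩
      · exact ⟨1, fun hc => absurd hc h⟩
    choose gg hgg using hchoice
    have hDfin : D.Finite := by
      apply Set.Finite.subset (Set.finite_range (fun g : G => W₁.map (ρ g)))
      intro W hW
      exact ⟨gg W, hgg W hW⟩
    set F := hDfin.toFinset with hF
    -- the candidate intertwiner
    set L : Submodule ℂ V → (V →ₗ[ℂ] V) :=
      fun W => ρ (gg W) ∘ₗ φ ∘ₗ ρ (gg W)⁻¹ with hL
    set P : Submodule ℂ V → (V →ₗ[ℂ] V) :=
      fun W => W.subtype ∘ₗ (W.orthogonalProjectionOnto).toLinearMap with hP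
    set Φ : V →ₗ[ℂ] V := ∑ W ∈ F, L W ∘ₗ P W with hΦ
    have hPself : ∀ (W : Submodule ℂ V) (x : V), x ∈ W → P W x = x := by
      intro W x hx
      simpa [hP] using (Submodule.starProjection_eq_self_iff (K := W)).mpr hx
    have hPzero : ∀ W ∈ D, ∀ W' ∈ D, W ≠ W' → ∀ x ∈ W', P W x = 0 := by
      intro W hW W' hW' hne' x hx
      have hx' : x ∈ Wᗮ := by
        rw [Submodule.mem_orthogonal]
        intro u hu
        exact horth W hW W' hW' hne' u hu x hx
      simpa [hP] using
        congrArg (Submodule.subtype W)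
          (Submodule.orthogonalProjectionOnto_apply_of_mem_orthogonal hx')
    have hΦeval : ∀ W ∈ D, ∀ x ∈ W, Φ x = ρ (gg W) (φ (ρ (gg W)⁻¹ x)) := by
      intro W hW x hx
      have : Φ x = ∑ W' ∈ F, L W' (P W' x) := by
        rw [hΦ]; simp [LinearMap.sum_apply]
      rw [this, Finset.sum_eq_single W]
      · rw [hPself W x hx]; rfl
      · intro W' hW'F hne'
        rw [hPzero W' (hDfin.mem_toFinset.mp hW'F) W hW hne' x hx]
        simp
      · intro hWF
        exact absurd (hDfin.mem_toFinset.mpr hW) hWF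
    -- Φ commutes with the G-action
    have hcomm : ∀ (h : G) (x : V), Φ (ρ h x) = ρ h (Φ x) := by
      intro h
      have : (⊤ : Submodule ℂ V) ≤ LinearMap.ker (Φ ∘ₗ ρ h - ρ h ∘ₗ Φ) := by
        rw [← hsum]
        apply sSup_le
        intro W hW
        intro x hx
        rw [LinearMap.mem_ker, LinearMap.sub_apply, sub_eq_zero]
        show Φ (ρ h x) = ρ h (Φ x)
        have hW' : W.map (ρ h) ∈ D := hinv h W hW
        have hxW' : ρ h x ∈ W.map (ρ h) := Submodule.mem_map_of_mem hx
        set g₂ := gg W with hg₂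
        set g₃ := gg (W.map (ρ h)) with hg₃
        have hgg₂ : W₁.map (ρ g₂) = W := hgg W hW
        have hgg₃ : W₁.map (ρ g₃) = W.map (ρ h) := hgg _ hW'
        have hy : ρ g₂⁻¹ x ∈ W₁ := hback g₂ W₁ x (hgg₂ ▸ hx)
        have hk : g₃⁻¹ * h * g₂ ∈ I := by
          rw [hI W₁ hW₁]
          have : W₁.map (ρ (g₃⁻¹ * h * g₂)) = ((W₁.map (ρ g₂)).map (ρ h)).map (ρ g₃⁻¹) := by
            rw [← Submodule.map_comp, ← Submodule.map_comp]
            congr 1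
            rw [map_mul, map_mul]
            rfl
          rw [this, hgg₂, ← hgg₃, ← Submodule.map_comp]
          have : ρ g₃⁻¹ ∘ₗ ρ g₃ = LinearMap.id := by
            rw [← Module.End.mul_eq_comp, ← map_mul, inv_mul_cancel, map_one]; rfl
          rw [this, Submodule.map_id]
        have key : ρ g₃⁻¹ (ρ h x) = ρ (g₃⁻¹ * h * g₂) (ρ g₂⁻¹ x) := by
          rw [hmul, hmul]
          congr 1
          group
        calc Φ (ρ h x) = ρ g₃ (φ (ρ g₃⁻¹ (ρ h x))) := hΦeval _ hW' _ hxW'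
          _ = ρ g₃ (φ (ρ (g₃⁻¹ * h * g₂) (ρ g₂⁻¹ x))) := by rw [key]
          _ = ρ g₃ (ρ (g₃⁻¹ * h * g₂) (φ (ρ g₂⁻¹ x))) := by
              rw [hequiv ⟨_, hk⟩ _ hy]
          _ = ρ (g₃ * (g₃⁻¹ * h * g₂)) (φ (ρ g₂⁻¹ x)) := hmul _ _ _
          _ = ρ (h * g₂) (φ (ρ g₂⁻¹ x)) := by group
          _ = ρ h (ρ g₂ (φ (ρ g₂⁻¹ x))) := (hmul _ _ _).symm
          _ = ρ h (Φ x) := by rw [← hΦeval W hW x hx]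
      intro x
      have := this (Submodule.mem_top (x := x))
      rw [LinearMap.mem_ker, LinearMap.sub_apply, sub_eq_zero] at this
      exact this
    -- Schur: Φ is a scalar
    obtain ⟨c, hc⟩ := Module.End.exists_eigenvalue (Φ : Module.End ℂ V)
    set E := Module.End.eigenspace (Φ : Module.End ℂ V) c with hE
    have hEinv : ∀ g : G, E.map (ρ g) ≤ E := by
      rintro g x ⟨y, hy, rfl⟩
      have hy' : Φ y = c • y := Module.End.mem_eigenspace_iff.mp hy
      refine Module.End.mem_eigenspace_iff.mpr ?_
      show Φ (ρ g y) = c • ρ g y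
      rw [hcomm g y, hy', map_smul]
    have hEtop : E = ⊤ := by
      rcases hirr E hEinv with h | h
      · exact absurd h hc
      · exact h
    have hscalar : ∀ x : V, Φ x = c • x := by
      intro x
      have : x ∈ E := hEtop ▸ Submodule.mem_top
      rwa [hE, Module.End.mem_eigenspace_iff] at this
    -- Φ agrees with φ on W₁
    have hg₁ : gg W₁ ∈ I := (hI W₁ hW₁ _).mpr (hgg W₁ hW₁)
    have hΦφ : ∀ w ∈ W₁, Φ w = φ w := by
      intro w hw
      rw [hΦeval W₁ hW₁ w hw]
      have hw' : ρ (gg W₁)⁻¹ w ∈ W₁ := by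
        refine hback (gg W₁) W₁ w ?_
        rw [hgg W₁ hW₁]; exact hw
      have : φ (ρ (gg W₁) (ρ (gg W₁)⁻¹ w)) = ρ (gg W₁) (φ (ρ (gg W₁)⁻¹ w)) :=
        hequiv ⟨gg W₁, hg₁⟩ _ hw'
      rw [← this, hinvapply']
    -- conclusion: every element of W₁ is zero, contradiction
    apply hnonzero W₁ hW₁
    rw [eq_bot_iff]
    intro w hw
    have h1 : φ w = c • w := by rw [← hΦφ w hw, hscalar]
    have h2 : φ w ∈ W₂ := hmap ▸ Submodule.mem_map_of_mem hw
    have h3 : φ w ∈ W₁ := h1 ▸ Submodule.smul_mem W₁ c hw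
    have h4 : φ w = 0 := by
      have : φ w ∈ W₁ ⊓ W₂ := ⟨h3, h2⟩
      rwa [hW1W2, Submodule.mem_bot] at this
    simpa using hinj w hw h4
end
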